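/- Let f : A ⇸ B be an M-morphism and g : B ⇸ C a dense multiplicative M-morphism (with C non-degenerate). Then there exists a unique M-morphism g∙f : A ⇸ C such that (g∙f)₁∘(1⊗g₁) = g₁∘(f₁⊗1) : A⊗B⊗C → C and (g∙f)₂∘(g₂⊗1) = g₂∘(1⊗f₂) : C⊗B⊗A → C. Moreover g∙f is dense if f is dense, and multiplicative if f is multiplicative. -/

import Mathlib

open CategoryTheory Category MonoidalCategory Limits

universe v u

variable {C : Type u} [Category.{v} C] [MonoidalCategory C]

/-- A semigroup multiplication is non-degenerate. -/
def NonDeg (A : C) (m : A ⊗ A ⟶ A) : Prop :=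
  (∀ X Y : C, Function.Injective (fun f : X ⟶ Y ⊗ A =>
      (f ▷ A) ≫ (α_ Y A A).hom ≫ (Y ◁ m))) ∧
  (∀ X Y : C, Function.Injective (fun g : X ⟶ A ⊗ Y =>
      (A ◁ g) ≫ (α_ A A Y).inv ≫ (m ▷ Y)))

/-- Associativity of a semigroup multiplication. -/
def SgAssoc (A : C) (m : A ⊗ A ⟶ A) : Prop :=
  (m ▷ A) ≫ m = (α_ A A A).hom ≫ (A ◁ m) ≫ m

/-- A pair (f₁, f₂) is an `𝕄`-morphism `A ⇸ B`: eq. (2). -/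
def IsMMor {A B : C} (mB : B ⊗ B ⟶ B) (f₁ : A ⊗ B ⟶ B) (f₂ : B ⊗ A ⟶ B) : Prop :=
  (f₂ ▷ B) ≫ mB = (α_ B A B).hom ≫ (B ◁ f₁) ≫ mB

/-- The first component of an `𝕄`-morphism is multiplicative. -/
def Mult₁ {A B : C} (mA : A ⊗ A ⟶ A) (f₁ : A ⊗ B ⟶ B) : Prop :=
  (mA ▷ B) ≫ f₁ = (α_ A A B).hom ≫ (A ◁ f₁) ≫ f₁

/-- The second component of an `𝕄`-morphism is multiplicative. -/
def Mult₂ {A B : C} (mA : A ⊗ A ⟶ A) (f₂ : B ⊗ A ⟶ B) : Prop :=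
  (α_ B A A).hom ≫ (B ◁ mA) ≫ f₂ = (f₂ ▷ A) ≫ f₂

/-- The standing assumptions on the class `Q` of regular epimorphisms. -/
structure QData (C : Type u) [Category.{v} C] [MonoidalCategory C] where
  Q : MorphismProperty C
  regEpi : ∀ ⦃X Y : C⦄ (f : X ⟶ Y), Q f → Nonempty (RegularEpi f)
  comp_mem : ∀ ⦃X Y Z : C⦄ (f : X ⟶ Y) (g : Y ⟶ Z), Q f → Q g → Q (f ≫ g)
  tensor_mem : ∀ ⦃X Y X' Y' : C⦄ (f : X ⟶ Y) (g : X' ⟶ Y'), Q f → Q g → Q (f ⊗ₘ g)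
  iso_mem : ∀ ⦃X Y : C⦄ (f : X ⟶ Y), IsIso f → Q f
  cancel : ∀ ⦃X Y Z : C⦄ (s : X ⟶ Y) (t : Y ⟶ Z), Q s → Q (s ≫ t) → Q t
  coeq : ∀ ⦃X Y : C⦄ (f : X ⟶ Y), Q f →
    ∃ (Z : C) (u v : Z ⟶ X) (h : u ≫ f = v ≫ f),
      Nonempty (IsColimit (Cofork.ofπ f h)) ∧
      (∀ W : C, Nonempty (IsColimit (Cofork.ofπ (f := W ◁ u) (g := W ◁ v) (W ◁ f)
        (by rw [← MonoidalCategory.whiskerLeft_comp, ← MonoidalCategory.whiskerLeft_comp, h])))) ∧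
      (∀ W : C, Nonempty (IsColimit (Cofork.ofπ (f := u ▷ W) (g := v ▷ W) (f ▷ W)
        (by rw [← MonoidalCategory.comp_whiskerRight, ← MonoidalCategory.comp_whiskerRight, h]))))


section MMorAux

lemma MMor.rcancel {Cc : C} {mC : Cc ⊗ Cc ⟶ Cc} (hnd : NonDeg Cc mC) {X : C} {x y : X ⟶ Cc}
    (h : (x ▷ Cc) ≫ mC = (y ▷ Cc) ≫ mC) : x = y := by
  have key : ∀ z : X ⟶ Cc, ((z ≫ (λ_ Cc).inv) ▷ Cc) ≫ (α_ (𝟙_ C) Cc Cc).hom ≫ ((𝟙_ C) ◁ mC)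
      = (z ▷ Cc) ≫ mC ≫ (λ_ Cc).inv := by intro z; simp
  have := hnd.1 X (𝟙_ C) (a₁ := x ≫ (λ_ Cc).inv) (a₂ := y ≫ (λ_ Cc).inv)
    (by simp only [key]; rw [reassoc_of% h])
  simpa using congrArg (· ≫ (λ_ Cc).hom) this

lemma MMor.lcancel {Cc : C} {mC : Cc ⊗ Cc ⟶ Cc} (hnd : NonDeg Cc mC) {X : C} {x y : X ⟶ Cc}
    (h : (Cc ◁ x) ≫ mC = (Cc ◁ y) ≫ mC) : x = y := by
  have key : ∀ z : X ⟶ Cc, (Cc ◁ (z ≫ (ρ_ Cc).inv)) ≫ (α_ Cc Cc (𝟙_ C)).inv ≫ (mC ▷ (𝟙_ C))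
      = (Cc ◁ z) ≫ mC ≫ (ρ_ Cc).inv := by intro z; simp
  have := hnd.2 X (𝟙_ C) (a₁ := x ≫ (ρ_ Cc).inv) (a₂ := y ≫ (ρ_ Cc).inv)
    (by simp only [key]; rw [reassoc_of% h])
  simpa using congrArg (· ≫ (ρ_ Cc).hom) this

lemma MMor.gcancel₁ {B Cc : C} {mC : Cc ⊗ Cc ⟶ Cc} {g₁ : B ⊗ Cc ⟶ Cc} {g₂ : Cc ⊗ B ⟶ Cc}
    (hnd : NonDeg Cc mC) (hg : (g₂ ▷ Cc) ≫ mC = (α_ Cc B Cc).hom ≫ (Cc ◁ g₁) ≫ mC)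
    {X : C} (hepi : Epi (g₂ ▷ X))
    {x y : X ⟶ Cc} (h : (B ◁ x) ≫ g₁ = (B ◁ y) ≫ g₁) : x = y := by
  apply MMor.lcancel hnd
  rw [← cancel_epi (g₂ ▷ X)]
  have key : ∀ z : X ⟶ Cc, (g₂ ▷ X) ≫ (Cc ◁ z) ≫ mC
      = (α_ Cc B X).hom ≫ (Cc ◁ ((B ◁ z) ≫ g₁)) ≫ mC := by
    intro z
    rw [← whisker_exchange_assoc, hg]
    simp [associator_naturality_right_assoc]
  rw [key, key, h]

lemma MMor.gcancel₂ {B Cc : C} {mC : Cc ⊗ Cc ⟶ Cc} {g₁ : B ⊗ Cc ⟶ Cc} {g₂ : Cc ⊗ B ⟶ Cc}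
    (hnd : NonDeg Cc mC) (hg : (g₂ ▷ Cc) ≫ mC = (α_ Cc B Cc).hom ≫ (Cc ◁ g₁) ≫ mC)
    {X : C} (hepi : Epi (X ◁ g₁))
    {x y : X ⟶ Cc} (h : (x ▷ B) ≫ g₂ = (y ▷ B) ≫ g₂) : x = y := by
  have hg' : (Cc ◁ g₁) ≫ mC = (α_ Cc B Cc).inv ≫ (g₂ ▷ Cc) ≫ mC := by rw [hg]; simp
  apply MMor.rcancel hnd
  rw [← cancel_epi (X ◁ g₁), ← cancel_epi (α_ X B Cc).hom]
  have key : ∀ z : X ⟶ Cc, (α_ X B Cc).hom ≫ (X ◁ g₁) ≫ (z ▷ Cc) ≫ mC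
      = (((z ▷ B) ≫ g₂) ▷ Cc) ≫ mC := by
    intro z
    rw [whisker_exchange_assoc, hg', associator_inv_naturality_left_assoc]
    simp [MonoidalCategory.comp_whiskerRight]
  rw [key, key, h]

end MMorAux

/-- Proposition 3.2: existence and uniqueness of the composite `g ∙ f` of an
`𝕄`-morphism `f : A ⇸ B` with a dense multiplicative `𝕄`-morphism `g : B ⇸ C`,
together with inheritance of density and multiplicativity from `f`. -/
theorem mmor_composition_exists_unique (QD : QData C) {A B Cc : C}
    (mA : A ⊗ A ⟶ A) (mB : B ⊗ B ⟶ B) (mC : Cc ⊗ Cc ⟶ Cc)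
    (hA : SgAssoc A mA) (hB : SgAssoc B mB) (hC : SgAssoc Cc mC)
    (hndB : NonDeg B mB) (hndC : NonDeg Cc mC)
    (hQB : QD.Q mB) (hQC : QD.Q mC)
    (f₁ : A ⊗ B ⟶ B) (f₂ : B ⊗ A ⟶ B) (hf : IsMMor mB f₁ f₂)
    (g₁ : B ⊗ Cc ⟶ Cc) (g₂ : Cc ⊗ B ⟶ Cc) (hg : IsMMor mC g₁ g₂)
    (hd₁ : QD.Q g₁) (hd₂ : QD.Q g₂)
    (hm₁ : Mult₁ mB g₁) (hm₂ : Mult₂ mB g₂) :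
    ∃ (p₁ : A ⊗ Cc ⟶ Cc) (p₂ : Cc ⊗ A ⟶ Cc),
      (IsMMor mC p₁ p₂ ∧
        ((α_ A B Cc).hom ≫ (A ◁ g₁) ≫ p₁ = (f₁ ▷ Cc) ≫ g₁) ∧
        ((g₂ ▷ A) ≫ p₂ = (α_ Cc B A).hom ≫ (Cc ◁ f₂) ≫ g₂)) ∧
      (∀ (q₁ : A ⊗ Cc ⟶ Cc) (q₂ : Cc ⊗ A ⟶ Cc), IsMMor mC q₁ q₂ →
        ((α_ A B Cc).hom ≫ (A ◁ g₁) ≫ q₁ = (f₁ ▷ Cc) ≫ g₁) →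
        ((g₂ ▷ A) ≫ q₂ = (α_ Cc B A).hom ≫ (Cc ◁ f₂) ≫ g₂) →
        q₁ = p₁ ∧ q₂ = p₂) ∧
      (QD.Q f₁ → QD.Q f₂ → QD.Q p₁ ∧ QD.Q p₂) ∧
      (Mult₁ mA f₁ → Mult₂ mA f₂ → Mult₁ mA p₁ ∧ Mult₂ mA p₂) := by
  -- restate the hypotheses as plain equations
  have hf' : (f₂ ▷ B) ≫ mB = (α_ B A B).hom ≫ (B ◁ f₁) ≫ mB := hf
  have hg' : (g₂ ▷ Cc) ≫ mC = (α_ Cc B Cc).hom ≫ (Cc ◁ g₁) ≫ mC := hg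
  have hm₁' : (mB ▷ Cc) ≫ g₁ = (α_ B B Cc).hom ≫ (B ◁ g₁) ≫ g₁ := hm₁
  have hm₂' : (α_ Cc B B).hom ≫ (Cc ◁ mB) ≫ g₂ = (g₂ ▷ B) ≫ g₂ := hm₂
  have epiQ : ∀ {X Y : C} (k : X ⟶ Y), QD.Q k → Epi k := by
    intro X Y k hk
    obtain ⟨i⟩ := QD.regEpi k hk
    exact RegularEpi.epi k i
  have QwR : ∀ {X Y : C} (k : X ⟶ Y) (W : C), QD.Q k → QD.Q (k ▷ W) := by
    intro X Y k W hk
    simpa using QD.tensor_mem k (𝟙 W) hk (QD.iso_mem _ inferInstance)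
  have QwL : ∀ {X Y : C} (k : X ⟶ Y) (W : C), QD.Q k → QD.Q (W ◁ k) := by
    intro X Y k W hk
    simpa using QD.tensor_mem (𝟙 W) k (QD.iso_mem _ inferInstance) hk
  haveI epi₁ : Epi (A ◁ g₁) := epiQ _ (QwL g₁ A hd₁)
  haveI epi₂ : Epi (g₂ ▷ A) := epiQ _ (QwR g₂ A hd₂)
  haveI epi₃ : Epi ((g₂ ▷ A) ▷ Cc) := epiQ _ (QwR _ Cc (QwR g₂ A hd₂))
  haveI epi₄ : Epi (((Cc ⊗ B) ⊗ A) ◁ g₁) := epiQ _ (QwL g₁ _ hd₁)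
  haveI epi₅ : Epi ((A ⊗ A) ◁ g₁) := epiQ _ (QwL g₁ _ hd₁)
  haveI epi₆ : Epi ((g₂ ▷ A) ▷ A) := epiQ _ (QwR _ A (QwR g₂ A hd₂))
  -- the two key exchange identities
  have G1 : (B ◁ ((α_ A B Cc).inv ≫ (f₁ ▷ Cc) ≫ g₁)) ≫ g₁
      = (α_ B A (B ⊗ Cc)).inv ≫ ((B ⊗ A) ◁ g₁) ≫ (f₂ ▷ Cc) ≫ g₁ := by
    have e1 : (B ◁ g₁) ≫ g₁ = (α_ B B Cc).inv ≫ (mB ▷ Cc) ≫ g₁ := by rw [hm₁']; simp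
    have e2 : (B ◁ f₁) ≫ mB = (α_ B A B).inv ≫ (f₂ ▷ B) ≫ mB := by rw [hf']; simp
    simp only [MonoidalCategory.whiskerLeft_comp, assoc]
    rw [e1, associator_inv_naturality_middle_assoc, ← comp_whiskerRight_assoc, e2]
    simp only [MonoidalCategory.comp_whiskerRight, assoc]
    rw [hm₁', associator_naturality_left_assoc, ← whisker_exchange_assoc]
    coherence
  have G2 : (((α_ Cc B A).hom ≫ (Cc ◁ f₂) ≫ g₂) ▷ B) ≫ g₂
      = (α_ (Cc ⊗ B) A B).hom ≫ (g₂ ▷ (A ⊗ B)) ≫ (Cc ◁ f₁) ≫ g₂ := by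
    have e3 : (Cc ◁ mB) ≫ g₂ = (α_ Cc B B).inv ≫ (g₂ ▷ B) ≫ g₂ := by rw [← hm₂']; simp
    simp only [MonoidalCategory.comp_whiskerRight, assoc]
    rw [← hm₂', associator_naturality_middle_assoc,
      ← MonoidalCategory.whiskerLeft_comp_assoc, hf']
    simp only [MonoidalCategory.whiskerLeft_comp, assoc]
    rw [e3, associator_inv_naturality_right_assoc, whisker_exchange_assoc]
    coherence
  -- coequalizer data
  obtain ⟨Z₁, u₁, v₁, hc₁, _, hLw₁, hRw₁⟩ := QD.coeq g₁ hd₁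
  obtain ⟨Z₂, u₂, v₂, hc₂, _, hLw₂, hRw₂⟩ := QD.coeq g₂ hd₂
  obtain ⟨colA⟩ := hLw₁ A
  obtain ⟨colA₂⟩ := hRw₂ A
  haveI epi₇ : Epi (g₂ ▷ (A ⊗ Z₁)) := epiQ _ (QwR g₂ _ hd₂)
  haveI epi₈ : Epi ((Z₂ ⊗ A) ◁ g₁) := epiQ _ (QwL g₁ _ hd₁)
  -- well-definedness for p₁
  have key₁ : ∀ w : Z₁ ⟶ B ⊗ Cc,
      (B ◁ ((A ◁ w) ≫ (α_ A B Cc).inv ≫ (f₁ ▷ Cc) ≫ g₁)) ≫ g₁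
      = (α_ B A Z₁).inv ≫ ((B ⊗ A) ◁ (w ≫ g₁)) ≫ (f₂ ▷ Cc) ≫ g₁ := by
    intro w
    rw [MonoidalCategory.whiskerLeft_comp, assoc, G1, associator_inv_naturality_right_assoc,
      ← MonoidalCategory.whiskerLeft_comp_assoc]
  have wd₁ : (A ◁ u₁) ≫ ((α_ A B Cc).inv ≫ (f₁ ▷ Cc) ≫ g₁)
      = (A ◁ v₁) ≫ ((α_ A B Cc).inv ≫ (f₁ ▷ Cc) ≫ g₁) := by
    apply MMor.gcancel₁ hndC hg' epi₇
    rw [key₁, key₁, hc₁]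
  -- well-definedness for p₂
  have key₂ : ∀ w : Z₂ ⟶ Cc ⊗ B,
      (((w ▷ A) ≫ (α_ Cc B A).hom ≫ (Cc ◁ f₂) ≫ g₂) ▷ B) ≫ g₂
      = (α_ Z₂ A B).hom ≫ ((w ≫ g₂) ▷ (A ⊗ B)) ≫ (Cc ◁ f₁) ≫ g₂ := by
    intro w
    rw [MonoidalCategory.comp_whiskerRight, assoc, G2, associator_naturality_left_assoc,
      ← comp_whiskerRight_assoc]
  have wd₂ : (u₂ ▷ A) ≫ ((α_ Cc B A).hom ≫ (Cc ◁ f₂) ≫ g₂)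
      = (v₂ ▷ A) ≫ ((α_ Cc B A).hom ≫ (Cc ◁ f₂) ≫ g₂) := by
    apply MMor.gcancel₂ hndC hg' epi₈
    rw [key₂, key₂, hc₂]
  -- define p₁ and p₂ by descending along the whiskered coequalizers
  obtain ⟨p₁, hp₁⟩ : ∃ p₁ : A ⊗ Cc ⟶ Cc,
      (A ◁ g₁) ≫ p₁ = (α_ A B Cc).inv ≫ (f₁ ▷ Cc) ≫ g₁ :=
    ⟨Cofork.IsColimit.desc colA _ wd₁, Cofork.IsColimit.π_desc' colA _ wd₁⟩
  obtain ⟨p₂, hp₂⟩ : ∃ p₂ : Cc ⊗ A ⟶ Cc,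
      (g₂ ▷ A) ≫ p₂ = (α_ Cc B A).hom ≫ (Cc ◁ f₂) ≫ g₂ :=
    ⟨Cofork.IsColimit.desc colA₂ _ wd₂, Cofork.IsColimit.π_desc' colA₂ _ wd₂⟩
  refine ⟨p₁, p₂, ?_⟩
  -- the M-morphism property of (p₁, p₂)
  have hM : (p₂ ▷ Cc) ≫ mC = (α_ Cc A Cc).hom ≫ (Cc ◁ p₁) ≫ mC := by
    rw [← cancel_epi ((g₂ ▷ A) ▷ Cc), ← cancel_epi (((Cc ⊗ B) ⊗ A) ◁ g₁)]
    -- left hand side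
    rw [← comp_whiskerRight_assoc, hp₂]
    simp only [MonoidalCategory.comp_whiskerRight, assoc]
    rw [hg', associator_naturality_middle_assoc, whisker_exchange_assoc,
      associator_naturality_right_assoc]
    -- right hand side
    rw [associator_naturality_left_assoc, ← whisker_exchange_assoc g₂ p₁, hg',
      associator_naturality_right_assoc, ← MonoidalCategory.whiskerLeft_comp_assoc (Cc ⊗ B), hp₁,
      associator_naturality_right_assoc]
    conv_rhs => rw [← MonoidalCategory.whiskerLeft_comp_assoc Cc, G1]
    simp only [MonoidalCategory.whiskerLeft_comp, assoc]
    coherence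
  refine ⟨⟨hM, ?_, hp₂⟩, ?_, ?_, ?_⟩
  · rw [hp₁]; simp
  · -- uniqueness
    intro q₁ q₂ _ hq₁ hq₂
    constructor
    · rw [← cancel_epi (A ◁ g₁), hp₁, ← hq₁]; simp
    · rw [← cancel_epi (g₂ ▷ A), hp₂, ← hq₂]
  · -- density
    intro hQf₁ hQf₂
    constructor
    · refine QD.cancel (A ◁ g₁) p₁ (QwL g₁ A hd₁) ?_
      rw [hp₁]
      exact QD.comp_mem _ _ (QD.iso_mem _ inferInstance)
        (QD.comp_mem _ _ (QwR f₁ Cc hQf₁) hd₁)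
    · refine QD.cancel (g₂ ▷ A) p₂ (QwR g₂ A hd₂) ?_
      rw [hp₂]
      exact QD.comp_mem _ _ (QD.iso_mem _ inferInstance)
        (QD.comp_mem _ _ (QwL f₂ Cc hQf₂) hd₂)
  · -- multiplicativity
    intro hmf₁ hmf₂
    have hmf₁' : (mA ▷ B) ≫ f₁ = (α_ A A B).hom ≫ (A ◁ f₁) ≫ f₁ := hmf₁
    have hmf₂' : (B ◁ mA) ≫ f₂ = (α_ B A A).inv ≫ (f₂ ▷ A) ≫ f₂ := by
      rw [← hmf₂]; simp
    constructor
    · show (mA ▷ Cc) ≫ p₁ = (α_ A A Cc).hom ≫ (A ◁ p₁) ≫ p₁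
      rw [← cancel_epi ((A ⊗ A) ◁ g₁)]
      -- left hand side
      rw [whisker_exchange_assoc mA g₁, hp₁, associator_inv_naturality_left_assoc,
        ← comp_whiskerRight_assoc, hmf₁']
      simp only [MonoidalCategory.comp_whiskerRight, assoc]
      -- right hand side
      rw [associator_naturality_right_assoc, ← MonoidalCategory.whiskerLeft_comp_assoc, hp₁]
      simp only [MonoidalCategory.whiskerLeft_comp, assoc]
      rw [hp₁, associator_inv_naturality_middle_assoc]
      coherence
    · show (α_ Cc A A).hom ≫ (Cc ◁ mA) ≫ p₂ = (p₂ ▷ A) ≫ p₂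
      rw [← cancel_epi ((g₂ ▷ A) ▷ A)]
      -- left hand side
      rw [associator_naturality_left_assoc, ← whisker_exchange_assoc g₂ mA, hp₂,
        associator_naturality_right_assoc, ← MonoidalCategory.whiskerLeft_comp_assoc, hmf₂']
      simp only [MonoidalCategory.whiskerLeft_comp, assoc]
      -- right hand side
      rw [← comp_whiskerRight_assoc, hp₂]
      simp only [MonoidalCategory.comp_whiskerRight, assoc]
      rw [hp₂, associator_naturality_middle_assoc]
      coherence
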